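/- For every integer n ≥ 3 and every 2-coloring of the edges of the complete 3-uniform hypergraph K^3_n, there is a monochromatic 2-tight component C such that |E^(2)(C)| ≥ C(n,2) − C(⌊n/2⌋, 2). -/

import Mathlib

open Finset

/-- The `s`-shadow of a hypergraph `H`: all `s`-element vertex sets contained in
some edge of `H`. -/
def hShadow {V : Type*} [DecidableEq V] (s : ℕ) (H : Finset (Finset V)) :
    Finset (Finset V) :=
  H.biUnion fun e => e.powersetCard s

/-- One step of `t`-tight connectivity: both `a` and `b` are edges of `H` and they
share at least `t` vertices. -/
def TightStep {V : Type*} [DecidableEq V] (t : ℕ) (H : Finset (Finset V))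
    (a b : Finset V) : Prop :=
  a ∈ H ∧ b ∈ H ∧ t ≤ (a ∩ b).card

/-- Two edges lie in the same `t`-tight component iff they are joined by a chain of
edges, consecutive ones sharing at least `t` vertices. -/
def TightConn {V : Type*} [DecidableEq V] (t : ℕ) (H : Finset (Finset V)) :
    Finset V → Finset V → Prop :=
  Relation.ReflTransGen (TightStep t H)

open scoped Classical in
/-- The `t`-tight component of the edge `e` in the hypergraph `H`. -/
noncomputable def tightComponent {V : Type*} [DecidableEq V] (t : ℕ)
    (H : Finset (Finset V)) (e : Finset V) : Finset (Finset V) :=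
  H.filter fun f => TightConn t H e f

/-- The `k`-uniform hypergraph `H i` of edges of `K^k_n` having color `i` under the
coloring `c`. -/
def colorClass (n r k : ℕ) (c : Finset (Fin n) → Fin r) (i : Fin r) :
    Finset (Finset (Fin n)) :=
  (Finset.univ.powersetCard k).filter fun e => c e = i

/-- `M(n,r,k,t,s;c)`: the largest number of vertex `s`-sets contained in the edges of
a monochromatic `t`-tight component of the `r`-coloring `c` of `K^k_n`. -/
noncomputable def Mcol (n r k t s : ℕ) (c : Finset (Fin n) → Fin r) : ℕ :=
  Finset.univ.sup fun i : Fin r =>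
    (colorClass n r k c i).sup fun e =>
      (hShadow s (tightComponent t (colorClass n r k c i) e)).card

/-- `M(n,r,k,t,s)`: the minimum of `M(n,r,k,t,s;c)` over all `r`-colorings `c` of
`K^k_n`. -/
noncomputable def Mmin (n r k t s : ℕ) : ℕ :=
  sInf {m | ∃ c : Finset (Fin n) → Fin r, Mcol n r k t s c = m}

/- ### Auxiliary development -/

section Aux

variable {V : Type*} [DecidableEq V]

theorem tightStep_symm {t : ℕ} {H : Finset (Finset V)} :
    Symmetric (TightStep t H) := by
  rintro a b ⟨ha, hb, h⟩
  exact ⟨hb, ha, by rwa [Finset.inter_comm]⟩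

theorem tightConn_symm {t : ℕ} {H : Finset (Finset V)} :
    Symmetric (TightConn t H) :=
  by
    haveI : Std.Symm (TightStep t H) := ⟨fun _ _ h => tightStep_symm h⟩
    exact fun _ _ h => (Relation.ReflTransGen.stdSymm).symm _ _ h

theorem mem_hShadow {s : ℕ} {H : Finset (Finset V)} {p : Finset V} :
    p ∈ hShadow s H ↔ ∃ e ∈ H, p ⊆ e ∧ p.card = s := by
  simp [hShadow, Finset.mem_biUnion, Finset.mem_powersetCard]

end Aux

theorem mem_colorClass {n r k : ℕ} {c : Finset (Fin n) → Fin r} {i : Fin r}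
    {e : Finset (Fin n)} :
    e ∈ colorClass n r k c i ↔ e.card = k ∧ c e = i := by
  simp [colorClass, Finset.mem_powersetCard]

/-- Adjacency in the color-`i` link graph of vertex `a`. -/
def LinkAdj {n : ℕ} (c : Finset (Fin n) → Fin 2) (i : Fin 2) (a x y : Fin n) : Prop :=
  x ≠ a ∧ y ≠ a ∧ x ≠ y ∧ c {a, x, y} = i

/-- Connectivity in the color-`i` link graph of vertex `a`. -/
def LinkConn {n : ℕ} (c : Finset (Fin n) → Fin 2) (i : Fin 2) (a : Fin n) :
    Fin n → Fin n → Prop :=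
  Relation.ReflTransGen (LinkAdj c i a)

/-- Vertex `a` has connected spanning link in color `i`. -/
def GoodV {n : ℕ} (c : Finset (Fin n) → Fin 2) (i : Fin 2) (a : Fin n) : Prop :=
  ∀ x y, x ≠ a → y ≠ a → LinkConn c i a x y

theorem linkAdj_symm {n : ℕ} {c : Finset (Fin n) → Fin 2} {i : Fin 2} {a : Fin n} :
    Symmetric (LinkAdj c i a) := by
  rintro x y ⟨hx, hy, hxy, hc⟩
  exact ⟨hy, hx, hxy.symm, by rwa [Finset.pair_comm y x]⟩

theorem linkConn_symm {n : ℕ} {c : Finset (Fin n) → Fin 2} {i : Fin 2} {a : Fin n} :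
    Symmetric (LinkConn c i a) :=
  by
    haveI : Std.Symm (LinkAdj c i a) := ⟨fun _ _ h => linkAdj_symm h⟩
    exact fun _ _ h => (Relation.ReflTransGen.stdSymm).symm _ _ h

/-- For every vertex, some color has connected spanning link. -/
theorem goodV_dichotomy {n : ℕ} (c : Finset (Fin n) → Fin 2) (a : Fin n) :
    GoodV c 0 a ∨ GoodV c 1 a := by
  by_cases h0 : GoodV c 0 a
  · exact Or.inl h0
  right
  rw [GoodV] at h0
  push_neg at h0
  obtain ⟨x, y, hx, hy, hxy⟩ := h0
  have hxyne : x ≠ y := by rintro rfl; exact hxy Relation.ReflTransGen.refl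
  -- helper: non-0-connected distinct vertices are 1-adjacent
  have adj1 : ∀ p q : Fin n, p ≠ a → q ≠ a → p ≠ q → ¬ LinkConn c 0 a p q →
      LinkAdj c 1 a p q := by
    intro p q hp hq hpq hnc
    refine ⟨hp, hq, hpq, ?_⟩
    by_contra hne
    have : c {a, p, q} = 0 := by omega
    exact hnc (Relation.ReflTransGen.single ⟨hp, hq, hpq, this⟩)
  intro u v hu hv
  by_cases huv : u = v
  · subst huv; exact Relation.ReflTransGen.refl
  by_cases hcon : LinkConn c 0 a u v
  · -- find w ∈ {x,y} not 0-connected to u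
    have hw : ¬ LinkConn c 0 a u x ∨ ¬ LinkConn c 0 a u y := by
      by_contra hb
      push_neg at hb
      exact hxy ((linkConn_symm hb.1).trans hb.2)
    obtain ⟨w, hwa, hwnc⟩ : ∃ w, w ≠ a ∧ ¬ LinkConn c 0 a u w := by
      rcases hw with h | h
      · exact ⟨x, hx, h⟩
      · exact ⟨y, hy, h⟩
    have hvw : ¬ LinkConn c 0 a v w := fun h => hwnc (hcon.trans h)
    have huw : u ≠ w := by rintro rfl; exact hwnc Relation.ReflTransGen.refl
    have hvwne : v ≠ w := by rintro rfl; exact hvw Relation.ReflTransGen.refl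
    exact Relation.ReflTransGen.head (adj1 u w hu hwa huw hwnc)
      (Relation.ReflTransGen.single
        (linkAdj_symm (adj1 v w hv hwa hvwne hvw)))
  · exact Relation.ReflTransGen.single (adj1 u v hu hv huv hcon)

theorem linkAdj_mem {n : ℕ} {c : Finset (Fin n) → Fin 2} {i : Fin 2} {a x y : Fin n}
    (h : LinkAdj c i a x y) : ({a, x, y} : Finset (Fin n)) ∈ colorClass n 2 3 c i := by
  obtain ⟨hx, hy, hxy, hc⟩ := h
  refine mem_colorClass.mpr ⟨?_, hc⟩
  rw [Finset.card_insert_of_notMem (by simp [Ne.symm hx, Ne.symm hy]),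
    Finset.card_insert_of_notMem (by simp [hxy]), Finset.card_singleton]

/-- Walking in the link graph of `a` keeps us in one tight component. -/
theorem walk_conn {n : ℕ} {c : Finset (Fin n) → Fin 2} {i : Fin 2} {a : Fin n}
    {y z : Fin n} (h : LinkConn c i a y z) :
    ∀ x, LinkAdj c i a x y →
      ∃ t ∈ colorClass n 2 3 c i, a ∈ t ∧ z ∈ t ∧
        TightConn 2 (colorClass n 2 3 c i) {a, x, y} t := by
  induction h with
  | refl =>
    intro x hxy
    exact ⟨{a, x, y}, linkAdj_mem hxy, by simp, by simp, Relation.ReflTransGen.refl⟩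
  | tail _ hstep ih =>
    intro x hxy
    rename_i b z' _
    obtain ⟨t, ht, hat, hbt, hconn⟩ := ih x hxy
    have hab : a ≠ b := Ne.symm hstep.1
    refine ⟨{a, b, z'}, linkAdj_mem hstep, by simp, by simp, hconn.tail ?_⟩
    refine ⟨ht, linkAdj_mem hstep, ?_⟩
    have : ({a, b} : Finset (Fin n)) ⊆ t ∩ {a, b, z'} := by
      intro u hu
      simp only [Finset.mem_insert, Finset.mem_singleton] at hu
      rcases hu with rfl | rfl <;> simp [hat, hbt]
    calc 2 = ({a, b} : Finset (Fin n)).card := by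
            rw [Finset.card_insert_of_notMem (by simp [hab]), Finset.card_singleton]
      _ ≤ _ := Finset.card_le_card this

/-- The star at a good vertex is covered by one tight component. -/
theorem good_cover {n : ℕ} (hn : 3 ≤ n) {c : Finset (Fin n) → Fin 2} {i : Fin 2}
    {a : Fin n} (hg : GoodV c i a) :
    ∃ e ∈ colorClass n 2 3 c i, ∀ z, z ≠ a →
      ∃ t ∈ colorClass n 2 3 c i, TightConn 2 (colorClass n 2 3 c i) e t ∧
        a ∈ t ∧ z ∈ t := by
  -- two distinct vertices different from a
  obtain ⟨b₁, hb₁, b₂, hb₂, hbne⟩ : ∃ b₁ ∈ Finset.univ.erase a, ∃ b₂ ∈ Finset.univ.erase a, b₁ ≠ b₂ := by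
    apply Finset.one_lt_card.mp
    rw [Finset.card_erase_of_mem (Finset.mem_univ a)]
    simp only [Finset.card_univ, Fintype.card_fin]
    omega
  rw [Finset.mem_erase] at hb₁ hb₂
  obtain ⟨y₀, hadj, _⟩ := Relation.ReflTransGen.cases_head (hg b₁ b₂ hb₁.1 hb₂.1)
    |>.resolve_left hbne
  refine ⟨{a, b₁, y₀}, linkAdj_mem hadj, fun z hz => ?_⟩
  have : LinkConn c i a y₀ z := hg y₀ z hadj.2.1 hz
  obtain ⟨t, ht, hat, hzt, hconn⟩ := walk_conn this b₁ hadj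
  exact ⟨t, ht, hconn, hat, hzt⟩

/-- All good vertices of a single color have their stars covered by one component. -/
theorem cover_set {n : ℕ} (hn : 3 ≤ n) {c : Finset (Fin n) → Fin 2} {i : Fin 2}
    {a₀ : Fin n} (h₀ : GoodV c i a₀) :
    ∃ e ∈ colorClass n 2 3 c i, ∀ b, GoodV c i b → ∀ z, z ≠ b →
      ∃ t ∈ colorClass n 2 3 c i, TightConn 2 (colorClass n 2 3 c i) e t ∧
        b ∈ t ∧ z ∈ t := by
  obtain ⟨e, he, hcov⟩ := good_cover hn h₀
  refine ⟨e, he, fun b hb z hz => ?_⟩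
  by_cases hba : b = a₀
  · subst hba; exact hcov z hz
  obtain ⟨e', he', hcov'⟩ := good_cover hn hb
  -- connect e to e' through the pair {a₀, b}
  obtain ⟨t₁, ht₁, hc₁, ha₀t₁, hbt₁⟩ := hcov b hba
  obtain ⟨t₂, ht₂, hc₂, hbt₂, ha₀t₂⟩ := hcov' a₀ (fun h => hba h.symm)
  have hstep : TightStep 2 (colorClass n 2 3 c i) t₁ t₂ := by
    refine ⟨ht₁, ht₂, ?_⟩
    have hsub : ({a₀, b} : Finset (Fin n)) ⊆ t₁ ∩ t₂ := by
      intro u hu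
      simp only [Finset.mem_insert, Finset.mem_singleton] at hu
      rcases hu with rfl | rfl <;> simp [ha₀t₁, ha₀t₂, hbt₁, hbt₂]
    calc 2 = ({a₀, b} : Finset (Fin n)).card := by
            rw [Finset.card_insert_of_notMem (by simp [Ne.symm hba]),
              Finset.card_singleton]
      _ ≤ _ := Finset.card_le_card hsub
  have hee' : TightConn 2 (colorClass n 2 3 c i) e e' :=
    ((hc₁.tail hstep).trans (tightConn_symm hc₂))
  obtain ⟨t, ht, hc, hbt, hzt⟩ := hcov' z hz
  exact ⟨t, ht, hee'.trans hc, hbt, hzt⟩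

/-- For every `n ≥ 3` and every 2-coloring of `K^3_n`, there is a monochromatic
2-tight component `C` with `|E^(2)(C)| ≥ C(n,2) - C(⌊n/2⌋,2)`. -/
theorem statement18 (n : ℕ) (hn : 3 ≤ n) (c : Finset (Fin n) → Fin 2) :
    ∃ i : Fin 2, ∃ e ∈ colorClass n 2 3 c i,
      n.choose 2 - (n / 2).choose 2 ≤
        (hShadow 2 (tightComponent 2 (colorClass n 2 3 c i) e)).card := by
  classical
  set R0 : Finset (Fin n) := Finset.univ.filter (fun a => GoodV c 0 a) with hR0
  set R1 : Finset (Fin n) := Finset.univ.filter (fun a => GoodV c 1 a) with hR1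
  have hunion : n ≤ R0.card + R1.card := by
    have hsub : (Finset.univ : Finset (Fin n)) ⊆ R0 ∪ R1 := by
      intro a _
      rcases goodV_dichotomy c a with h | h
      · exact Finset.mem_union_left _ (Finset.mem_filter.mpr ⟨Finset.mem_univ a, h⟩)
      · exact Finset.mem_union_right _ (Finset.mem_filter.mpr ⟨Finset.mem_univ a, h⟩)
    calc n = (Finset.univ : Finset (Fin n)).card := by simp
      _ ≤ (R0 ∪ R1).card := Finset.card_le_card hsub
      _ ≤ R0.card + R1.card := Finset.card_union_le _ _
  obtain ⟨i, R, hRdef, hRcard⟩ :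
      ∃ (i : Fin 2) (R : Finset (Fin n)),
        R = Finset.univ.filter (fun a => GoodV c i a) ∧ n - n / 2 ≤ R.card := by
    rcases le_or_gt (n - n / 2) R0.card with h | h
    · exact ⟨0, R0, hR0, h⟩
    · exact ⟨1, R1, hR1, by omega⟩
  have hRgood : ∀ a ∈ R, GoodV c i a := fun a ha => (Finset.mem_filter.mp (hRdef ▸ ha)).2
  have hRne : R.Nonempty := Finset.card_pos.mp (by omega)
  obtain ⟨a₀, ha₀⟩ := hRne
  obtain ⟨e, he, hcov⟩ := cover_set hn (hRgood a₀ ha₀)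
  refine ⟨i, e, he, ?_⟩
  -- the set of pairs meeting R
  set P : Finset (Finset (Fin n)) :=
    (Finset.univ.powersetCard 2).filter (fun p => ∃ u ∈ p, u ∈ R) with hP
  have hPsub : P ⊆ hShadow 2 (tightComponent 2 (colorClass n 2 3 c i) e) := by
    intro p hp
    rw [hP, Finset.mem_filter, Finset.mem_powersetCard] at hp
    obtain ⟨⟨_, hcard⟩, u, hup, huR⟩ := hp
    obtain ⟨x, y, hxy, rfl⟩ := Finset.card_eq_two.mp hcard
    -- write p = {u, v}
    obtain ⟨v, hvu, hpv⟩ : ∃ v, v ≠ u ∧ ({x, y} : Finset (Fin n)) = {u, v} := by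
      simp only [Finset.mem_insert, Finset.mem_singleton] at hup
      rcases hup with rfl | rfl
      · exact ⟨y, Ne.symm hxy, rfl⟩
      · exact ⟨x, hxy, Finset.pair_comm x u⟩
    obtain ⟨t, ht, hconn, hut, hvt⟩ := hcov u (hRgood u huR) v hvu
    rw [mem_hShadow]
    refine ⟨t, ?_, ?_, hcard⟩
    · exact Finset.mem_filter.mpr ⟨ht, hconn⟩
    · rw [hpv]
      intro w hw
      simp only [Finset.mem_insert, Finset.mem_singleton] at hw
      rcases hw with rfl | rfl <;> assumption
  have hPcard : P.card + ((n - R.card).choose 2) = n.choose 2 := by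
    have hneg : (Finset.univ.powersetCard 2).filter (fun p : Finset (Fin n) => ¬ ∃ u ∈ p, u ∈ R)
        = Rᶜ.powersetCard 2 := by
      ext q
      simp only [Finset.mem_filter, Finset.mem_powersetCard, Finset.subset_univ, true_and,
        not_exists]
      rw [Finset.subset_iff]
      simp only [Finset.mem_compl]
      tauto
    have := Finset.card_filter_add_card_filter_not
      (s := Finset.univ.powersetCard 2) (p := fun p : Finset (Fin n) => ∃ u ∈ p, u ∈ R)
    simp only [hneg, Finset.card_powersetCard, Finset.card_compl, Finset.card_univ,
      Fintype.card_fin, ← hP] at this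
    omega
  have hmono : (n - R.card).choose 2 ≤ (n / 2).choose 2 :=
    Nat.choose_le_choose 2 (by omega)
  have hfinal : n.choose 2 - (n / 2).choose 2 ≤ P.card := by omega
  exact hfinal.trans (Finset.card_le_card hPsub)
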